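/- Pointwise indistinguishability fails Eq-composability for discrete distributions: with α = exp(ε) for any ε ≥ 0, let μ₁ = (1/10)δ₀ + (9/10)δ₁ and μ₂ = (9/(10α))δ₁ + (1 − 9/(10α))δ₂ on {0,1,2}, and f : {0,1,2} → Dist{0,1} given by f(0) = (1/10)δ₀ + (9/10)δ₁, f(1) = (9/10)δ₀ + (1/10)δ₁, f(2) = δ₁. Then PW^ε(μ₁,μ₂) = 1/10 and PW^ε(f x, f x) = 0 for all x, but PW^ε(f♯ μ₁, f♯ μ₂) = 82/100 > 1/10 + 0. -/

import Mathlib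

open Finset in
/-- Pointwise indistinguishability `PW^ε(μ₁,μ₂)` for finitely supported distributions:
the infimum of `μ₁(J ∖ A)` over subsets `A` on which `μ₁ ≤ exp(ε)·μ₂` pointwise. -/
noncomputable def PW {J : Type*} [Fintype J] [DecidableEq J] (ε : ℝ) (μ₁ μ₂ : J → ℝ) : ℝ :=
  sInf {t : ℝ | ∃ A : Finset J,
    (∀ s ∈ A, μ₁ s ≤ Real.exp ε * μ₂ s) ∧ t = ∑ s ∈ Aᶜ, μ₁ s}

/-- `μ₁ = (1/10)δ₀ + (9/10)δ₁` on `{0,1,2}`. -/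
noncomputable def pwMu1 : Fin 3 → ℝ := ![1 / 10, 9 / 10, 0]

/-- `μ₂ = (9/(10α))δ₁ + (1 − 9/(10α))δ₂` on `{0,1,2}`, where `α = exp ε`. -/
noncomputable def pwMu2 (ε : ℝ) : Fin 3 → ℝ :=
  ![0, 9 / (10 * Real.exp ε), 1 - 9 / (10 * Real.exp ε)]

/-- The kernel `f : {0,1,2} → Dist{0,1}`. -/
noncomputable def pwF : Fin 3 → Fin 2 → ℝ :=
  ![![1 / 10, 9 / 10], ![9 / 10, 1 / 10], ![0, 1]]

lemma PW_eq {J : Type*} [Fintype J] [DecidableEq J] (ε : ℝ) (μ₁ μ₂ : J → ℝ) (v : ℝ)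
    (hmem : ∃ A : Finset J, (∀ s ∈ A, μ₁ s ≤ Real.exp ε * μ₂ s) ∧ v = ∑ s ∈ Aᶜ, μ₁ s)
    (hlb : ∀ A : Finset J, (∀ s ∈ A, μ₁ s ≤ Real.exp ε * μ₂ s) → v ≤ ∑ s ∈ Aᶜ, μ₁ s) :
    PW ε μ₁ μ₂ = v := by
  apply IsLeast.csInf_eq
  constructor
  · exact hmem
  · rintro t ⟨A, hA, rfl⟩; exact hlb A hA

/-- Pointwise indistinguishability fails Eq-composability. -/
theorem pointwise_indistinguishability_not_eq_composable (ε : ℝ) (hε : 0 ≤ ε) :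
    PW ε pwMu1 (pwMu2 ε) = 1 / 10 ∧
    (∀ x : Fin 3, PW ε (pwF x) (pwF x) = 0) ∧
    PW ε (fun y => ∑ x : Fin 3, pwMu1 x * pwF x y)
        (fun y => ∑ x : Fin 3, pwMu2 ε x * pwF x y) = 82 / 100 ∧
    (82 / 100 : ℝ) > 1 / 10 + 0 := by
  have hpos := Real.exp_pos ε
  have hne := hpos.ne'
  have h1 : 1 ≤ Real.exp ε := Real.one_le_exp hε
  refine ⟨?_, ?_, ?_, by norm_num⟩
  · apply PW_eq
    · refine ⟨{1, 2}, ?_, ?_⟩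
      · intro s hs
        fin_cases hs
        · simp only [pwMu1, pwMu2, Matrix.cons_val_one, Matrix.head_cons, Matrix.cons_val_zero]
          rw [show Real.exp ε * (9 / (10 * Real.exp ε)) = 9/10 by field_simp]
        · simp only [pwMu1, pwMu2]
          norm_num [Matrix.cons_val_two, Matrix.tail_cons]
          have : Real.exp ε * (1 - 9 / (10 * Real.exp ε)) = Real.exp ε - 9/10 := by
            field_simp
          rw [this]; linarith
      · have : ({1, 2}ᶜ : Finset (Fin 3)) = {0} := by decide
        rw [this, Finset.sum_singleton]
        norm_num [pwMu1]
    · intro A hA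
      have h0 : (0 : Fin 3) ∉ A := by
        intro h
        have := hA 0 h
        simp [pwMu1, pwMu2] at this
        linarith
      have := Finset.single_le_sum (f := pwMu1)
        (fun i _ => by fin_cases i <;> norm_num [pwMu1]) (Finset.mem_compl.mpr h0)
      simpa [pwMu1] using this
  · intro x
    apply PW_eq
    · refine ⟨Finset.univ, ?_, by simp⟩
      intro s _
      have hnn : 0 ≤ pwF x s := by fin_cases x <;> fin_cases s <;> norm_num [pwF]
      nlinarith
    · intro A hA
      apply Finset.sum_nonneg
      intro i _
      fin_cases x <;> fin_cases i <;> norm_num [pwF]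
  · apply PW_eq
    · refine ⟨{1}, ?_, ?_⟩
      · intro s hs
        fin_cases hs
        simp only [pwMu1, pwMu2, pwF, Fin.sum_univ_three]
        norm_num [Matrix.cons_val_one, Matrix.head_cons, Matrix.cons_val_two, Matrix.tail_cons]
        have : Real.exp ε * (9 / (10 * Real.exp ε) * (1/10) + (1 - 9 / (10 * Real.exp ε)) * 1)
            = Real.exp ε - 81/100 := by field_simp; ring
        nlinarith [this]
      · have : ({1}ᶜ : Finset (Fin 2)) = {0} := by decide
        rw [this, Finset.sum_singleton]
        simp [pwMu1, pwF, Fin.sum_univ_three]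
        norm_num
    · intro A hA
      have h0 : (0 : Fin 2) ∉ A := by
        intro h
        have := hA 0 h
        simp [pwMu1, pwMu2, pwF, Fin.sum_univ_three] at this
        rw [show Real.exp ε * (9 / (10 * Real.exp ε) * (9/10)) = 81/100 by field_simp; ring] at this
        norm_num at this
      have := Finset.single_le_sum (f := fun y => ∑ x : Fin 3, pwMu1 x * pwF x y)
        (fun i _ => by
          apply Finset.sum_nonneg
          intro x _
          have h1 : 0 ≤ pwMu1 x := by fin_cases x <;> norm_num [pwMu1]
          have h2 : 0 ≤ pwF x i := by fin_cases x <;> fin_cases i <;> norm_num [pwF]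
          positivity) (Finset.mem_compl.mpr h0)
      simp only [pwMu1, pwF, Fin.sum_univ_three] at this ⊢
      norm_num [Matrix.cons_val_two, Matrix.tail_cons] at this ⊢
      linarith
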